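/- Let K_{1,n} be the star with n ≥ 3 leaves. Then C_{2,1}^T(K_{1,n}) = n + 2. -/

import Mathlib

open SimpleGraph

/-- A (p,1)-total labelling of `G`: adjacent vertices get distinct colors, edges sharing an
endpoint get distinct colors, and a vertex and an incident edge differ by at least `p`. -/
def IsPOneTotalLabelling {V : Type*} (G : SimpleGraph V) (p : ℕ)
    (cv : V → ℤ) (ce : G.edgeSet → ℤ) : Prop :=
  (∀ u v : V, G.Adj u v → cv u ≠ cv v) ∧
  (∀ e f : G.edgeSet, e ≠ f → (∃ v : V, v ∈ (e : Sym2 V) ∧ v ∈ (f : Sym2 V)) → ce e ≠ ce f) ∧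
  (∀ (v : V) (e : G.edgeSet), v ∈ (e : Sym2 V) → (p : ℤ) ≤ |cv v - ce e|)

/-- χ_{p,1}^T(G): least `k` such that `G` has a (p,1)-total labelling with colors in
`{0, …, k-1}`. -/
noncomputable def pOneTotalChromatic {V : Type*} (G : SimpleGraph V) (p : ℕ) : ℕ :=
  sInf {k : ℕ | ∃ cv ce, IsPOneTotalLabelling G p cv ce ∧
    (∀ v : V, cv v ∈ Set.Ico (0 : ℤ) k) ∧ (∀ e : G.edgeSet, ce e ∈ Set.Ico (0 : ℤ) k)}

/-- λ_p^T(G): least `k` such that `G` has a (p,1)-total labelling with colors in `{0, …, k}`. -/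
noncomputable def pOneTotalNumber {V : Type*} (G : SimpleGraph V) (p : ℕ) : ℕ :=
  sInf {k : ℕ | ∃ cv ce, IsPOneTotalLabelling G p cv ce ∧
    (∀ v : V, cv v ∈ Set.Icc (0 : ℤ) k) ∧ (∀ e : G.edgeSet, ce e ∈ Set.Icc (0 : ℤ) k)}

/-- `G` is `L`-(p,1)-total labelable for list assignment `(Lv, Le)`. -/
def ListPOneTotalLabelable {V : Type*} (G : SimpleGraph V) (p : ℕ)
    (Lv : V → Finset ℤ) (Le : G.edgeSet → Finset ℤ) : Prop :=
  ∃ cv ce, IsPOneTotalLabelling G p cv ce ∧ (∀ v, cv v ∈ Lv v) ∧ (∀ e, ce e ∈ Le e)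

/-- C_{p,1}^T(G): least `k` such that `G` is `L`-(p,1)-total labelable for every list
assignment whose lists all have size `k`. -/
noncomputable def pOneTotalChoosability {V : Type*} (G : SimpleGraph V) (p : ℕ) : ℕ :=
  sInf {k : ℕ | ∀ (Lv : V → Finset ℤ) (Le : G.edgeSet → Finset ℤ),
    (∀ v, (Lv v).card = k) → (∀ e, (Le e).card = k) → ListPOneTotalLabelable G p Lv Le}

/-- An L(p,q)-labelling of `H`. -/
def IsLpqLabelling {V : Type*} (H : SimpleGraph V) (p q : ℕ) (f : V → ℤ) : Prop :=
  (∀ u v : V, H.Adj u v → (p : ℤ) ≤ |f u - f v|) ∧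
  (∀ u v : V, H.dist u v = 2 → (q : ℤ) ≤ |f u - f v|)

/-- χ^{p,q}(H): least `k` such that `H` has an L(p,q)-labelling with colors in `{0, …, k-1}`. -/
noncomputable def LpqChromatic {V : Type*} (H : SimpleGraph V) (p q : ℕ) : ℕ :=
  sInf {k : ℕ | ∃ f, IsLpqLabelling H p q f ∧ ∀ v : V, f v ∈ Set.Ico (0 : ℤ) k}

/-- χ_l^{p,q}(H): least `k` such that from every assignment of lists of size `k`, `H` has an
L(p,q)-labelling choosing each vertex's color from its list. -/
noncomputable def listLpqChromatic {V : Type*} (H : SimpleGraph V) (p q : ℕ) : ℕ :=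
  sInf {k : ℕ | ∀ L : V → Finset ℤ, (∀ v, (L v).card = k) →
    ∃ f, IsLpqLabelling H p q f ∧ ∀ v : V, f v ∈ L v}

/-- The star `K_{1,n}`: vertex `0` is the center, adjacent to the `n` leaves. -/
def starGraphK (n : ℕ) : SimpleGraph (Fin (n + 1)) :=
  SimpleGraph.fromRel (fun v w => v = 0 ∨ w = 0)

/-- The incidence graph `S_I(G)`: replace every edge of `G` by a path of length 2. -/
def incidenceGraph {V : Type*} (G : SimpleGraph V) : SimpleGraph (V ⊕ G.edgeSet) where
  Adj x y :=
    (∃ (v : V) (e : G.edgeSet), x = Sum.inl v ∧ y = Sum.inr e ∧ v ∈ (e : Sym2 V)) ∨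
    (∃ (v : V) (e : G.edgeSet), x = Sum.inr e ∧ y = Sum.inl v ∧ v ∈ (e : Sym2 V))
  symm := by
    constructor
    rintro x y (⟨v, e, rfl, rfl, h⟩ | ⟨v, e, rfl, rfl, h⟩)
    · exact Or.inr ⟨v, e, rfl, rfl, h⟩
    · exact Or.inl ⟨v, e, rfl, rfl, h⟩
  loopless := by
    constructor
    rintro x (⟨v, e, h1, h2, -⟩ | ⟨v, e, h1, h2, -⟩) <;> subst h1 <;> simp at h2

/-- `H` is a minor of `G`: there are pairwise disjoint nonempty connected branch sets in `G`,
one for each vertex of `H`, with an edge of `G` between the branch sets of any two vertices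
adjacent in `H`. -/
def IsGraphMinor {W V : Type*} (H : SimpleGraph W) (G : SimpleGraph V) : Prop :=
  ∃ B : W → Set V,
    (∀ w, (B w).Nonempty) ∧
    (∀ w, (G.induce (B w)).Connected) ∧
    (∀ w₁ w₂, w₁ ≠ w₂ → Disjoint (B w₁) (B w₂)) ∧
    (∀ w₁ w₂, H.Adj w₁ w₂ → ∃ v₁ ∈ B w₁, ∃ v₂ ∈ B w₂, G.Adj v₁ v₂)

/-- A graph is outerplanar iff it has neither `K₄` nor `K_{2,3}` as a minor. -/
def Outerplanar {V : Type*} (G : SimpleGraph V) : Prop :=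
  ¬ IsGraphMinor (completeGraph (Fin 4)) G ∧
  ¬ IsGraphMinor (completeBipartiteGraph (Fin 2) (Fin 3)) G

section StarAux
open Finset

section star


lemma star_adj {n : ℕ} {v w : Fin (n+1)} :
    (starGraphK n).Adj v w ↔ v ≠ w ∧ (v = 0 ∨ w = 0) := by
  simp only [starGraphK, SimpleGraph.fromRel_adj]
  tauto

lemma star_edge_rep' {n : ℕ} {e : Sym2 (Fin (n+1))} (he : e ∈ (starGraphK n).edgeSet) :
    ∃ i : Fin (n+1), i ≠ 0 ∧ e = s(0, i) := by
  induction e using Sym2.ind with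
  | _ v w =>
    rw [SimpleGraph.mem_edgeSet, star_adj] at he
    obtain ⟨hne, h | h⟩ := he
    · subst h; exact ⟨w, fun hw => hne hw.symm, rfl⟩
    · subst h; exact ⟨v, hne, Sym2.eq_swap⟩

lemma zero_mem_star_edge {n : ℕ} (e : (starGraphK n).edgeSet) :
    (0 : Fin (n+1)) ∈ (e : Sym2 (Fin (n+1))) := by
  obtain ⟨i, hi, h⟩ := star_edge_rep' e.2
  rw [h]; exact Sym2.mem_mk_left _ _

noncomputable def starLeaf {n : ℕ} (e : (starGraphK n).edgeSet) : Fin (n+1) :=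
  (star_edge_rep' e.2).choose

lemma starLeaf_ne {n : ℕ} (e : (starGraphK n).edgeSet) : starLeaf e ≠ 0 :=
  (star_edge_rep' e.2).choose_spec.1

lemma starLeaf_eq {n : ℕ} (e : (starGraphK n).edgeSet) :
    (e : Sym2 (Fin (n+1))) = s(0, starLeaf e) :=
  (star_edge_rep' e.2).choose_spec.2

def leafEdge (n : ℕ) (i : Fin (n+1)) (hi : i ≠ 0) : (starGraphK n).edgeSet :=
  ⟨s(0, i), by rw [SimpleGraph.mem_edgeSet, star_adj]; exact ⟨fun h => hi h.symm, Or.inl rfl⟩⟩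

lemma sym2_zero_inj {n : ℕ} {i j : Fin (n+1)} (hi : i ≠ 0)
    (h : s(0, i) = s(0, j)) : i = j := by
  rw [Sym2.eq_iff] at h
  rcases h with ⟨-, h⟩ | ⟨h1, h2⟩
  · exact h
  · exact absurd h2 hi

lemma starLeaf_leafEdge {n : ℕ} (i : Fin (n+1)) (hi : i ≠ 0) :
    starLeaf (leafEdge n i hi) = i :=
  (sym2_zero_inj (starLeaf_ne _) (starLeaf_eq (leafEdge n i hi)).symm)

lemma starLeaf_injective {n : ℕ} : Function.Injective (starLeaf (n := n)) := by
  intro e f h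
  apply Subtype.ext
  rw [starLeaf_eq e, starLeaf_eq f, h]

lemma leafEdge_eq {n : ℕ} (e : (starGraphK n).edgeSet) :
    leafEdge n (starLeaf e) (starLeaf_ne e) = e :=
  Subtype.ext (starLeaf_eq e).symm

lemma card_leaves (n : ℕ) : Fintype.card {i : Fin (n+1) // i ≠ 0} = n := by
  simp [Fintype.card_subtype_compl]

end star


-- key combinatorial lemma: choose center color and SDR for edge lists
lemma exists_center_and_sdr {ι : Type*} [Fintype ι] (n : ℕ) (hn : 3 ≤ n)
    (hι : Fintype.card ι = n)
    (L0 : Finset ℤ) (Le : ι → Finset ℤ)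
    (hL0 : L0.card = n + 2) (hLe : ∀ i, (Le i).card = n + 2) :
    ∃ c0 ∈ L0, ∃ f : ι → ℤ, Function.Injective f ∧
      ∀ i, f i ∈ Le i ∧ f i ≠ c0 - 1 ∧ f i ≠ c0 ∧ f i ≠ c0 + 1 := by
  classical
  -- we find c0 such that Hall's condition holds for t i := Le i \ {c0-1,c0,c0+1}
  suffices h : ∃ c0 ∈ L0, ∀ s : Finset ι,
      s.card ≤ (s.biUnion (fun i => Le i \ {c0 - 1, c0, c0 + 1})).card by
    obtain ⟨c0, hc0, hall⟩ := h
    obtain ⟨f, hf, hmem⟩ :=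
      (Finset.all_card_le_biUnion_card_iff_existsInjective'
        (fun i => Le i \ ({c0 - 1, c0, c0 + 1} : Finset ℤ))).mp hall
    refine ⟨c0, hc0, f, hf, fun i => ?_⟩
    have := hmem i
    simp only [mem_sdiff, mem_insert, mem_singleton] at this
    tauto
  have hL0ne : L0.Nonempty := by rw [← Finset.card_pos, hL0]; omega
  by_cases hsame : ∀ i j : ι, Le i = Le j
  · -- all edge lists equal some L
    have hιne : Nonempty ι := Fintype.card_pos_iff.mp (by omega)
    obtain ⟨i₀⟩ := hιne
    set L := Le i₀ with hLdef
    -- find c0 ∈ L0 with c0 ∉ L or c0 + 1 ∉ L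
    have hkey : ∃ c0 ∈ L0, c0 ∉ L ∨ c0 + 1 ∉ L := by
      by_contra hcon
      push_neg at hcon
      set m := L0.max' hL0ne with hm
      have hmL0 : m ∈ L0 := L0.max'_mem hL0ne
      have h1 : m + 1 ∉ L0 := by
        intro h
        have := L0.le_max' _ h
        omega
      have hsub : insert (m + 1) L0 ⊆ L := by
        intro x hx
        rcases Finset.mem_insert.mp hx with rfl | hx
        · exact (hcon m hmL0).2
        · exact (hcon x hx).1
      have := Finset.card_le_card hsub
      rw [Finset.card_insert_of_notMem h1, hL0, hLe i₀] at this
      omega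
    obtain ⟨c0, hc0, hc⟩ := hkey
    refine ⟨c0, hc0, fun s => ?_⟩
    rcases s.eq_empty_or_nonempty with rfl | ⟨i, hi⟩
    · simp
    · have hsub : Le i \ ({c0 - 1, c0, c0 + 1} : Finset ℤ) ⊆
          s.biUnion (fun i => Le i \ ({c0 - 1, c0, c0 + 1} : Finset ℤ)) :=
        Finset.subset_biUnion_of_mem (fun i => Le i \ ({c0 - 1, c0, c0 + 1} : Finset ℤ)) hi
      refine le_trans ?_ (Finset.card_le_card hsub)
      -- card (Le i \ F) ≥ n ≥ s.card
      have hLi : Le i = L := hsame i i₀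
      have hint : (Le i ∩ {c0 - 1, c0, c0 + 1}).card ≤ 2 := by
        rcases hc with hc | hc
        · have : Le i ∩ {c0 - 1, c0, c0 + 1} ⊆ {c0 - 1, c0 + 1} := by
            intro x hx
            simp only [mem_inter, mem_insert, mem_singleton] at hx ⊢
            rcases hx.2 with h | h | h
            · tauto
            · exact absurd (h ▸ hx.1) (hLi ▸ hc)
            · tauto
          have h2 := Finset.card_insert_le (c0 - 1) ({c0 + 1} : Finset ℤ)
          simp only [Finset.card_singleton] at h2
          have := Finset.card_le_card this
          omega
        · have : Le i ∩ {c0 - 1, c0, c0 + 1} ⊆ {c0 - 1, c0} := by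
            intro x hx
            simp only [mem_inter, mem_insert, mem_singleton] at hx ⊢
            rcases hx.2 with h | h | h
            · tauto
            · tauto
            · exact absurd (h ▸ hx.1) (hLi ▸ hc)
          have h2 := Finset.card_insert_le (c0 - 1) ({c0} : Finset ℤ)
          simp only [Finset.card_singleton] at h2
          have := Finset.card_le_card this
          omega
      have heq := Finset.card_sdiff_add_card_inter (Le i) ({c0 - 1, c0, c0 + 1} : Finset ℤ)
      have hs : s.card ≤ n := by
        have := Finset.card_le_univ s
        rwa [hι] at this
      have := hLe i
      omega
  · -- not all edge lists are equal
    push_neg at hsame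
    obtain ⟨j₁, j₂, hj⟩ := hsame
    obtain ⟨c0, hc0⟩ := hL0ne
    refine ⟨c0, hc0, fun s => ?_⟩
    set F : Finset ℤ := {c0 - 1, c0, c0 + 1} with hF
    have hFcard : F.card ≤ 3 := by
      rw [hF]
      have h1 := Finset.card_insert_le (c0 - 1) ({c0, c0 + 1} : Finset ℤ)
      have h2 := Finset.card_insert_le c0 ({c0 + 1} : Finset ℤ)
      simp only [Finset.card_singleton] at h2
      omega
    have htcard : ∀ i : ι, n - 1 ≤ (Le i \ F).card := by
      intro i
      have heq := Finset.card_sdiff_add_card_inter (Le i) F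
      have h2 : (Le i ∩ F).card ≤ 3 := le_trans (Finset.card_le_card (Finset.inter_subset_right)) hFcard
      have := hLe i
      omega
    rcases s.eq_empty_or_nonempty with rfl | ⟨i, hi⟩
    · simp
    have hsub : Le i \ F ⊆ s.biUnion (fun i => Le i \ F) :=
      Finset.subset_biUnion_of_mem (fun i => Le i \ F) hi
    have hs : s.card ≤ n := by
      have := Finset.card_le_univ s
      rwa [hι] at this
    by_cases hsn : s.card ≤ n - 1
    · exact le_trans hsn (le_trans (htcard i) (Finset.card_le_card hsub))
    -- s.card = n, so s = univ
    have hscard : s.card = n := by omega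
    have hsuniv : s = Finset.univ := Finset.eq_univ_of_card s (by rw [hscard, hι])
    by_contra hcon
    push_neg at hcon
    set U := s.biUnion (fun i => Le i \ F) with hU
    have hUcard : U.card ≤ n - 1 := by omega
    have hteq : ∀ i : ι, Le i \ F = U := by
      intro i
      have hsub' : Le i \ F ⊆ U := Finset.subset_biUnion_of_mem (fun i => Le i \ F) (by rw [hsuniv]; exact Finset.mem_univ i)
      exact Finset.eq_of_subset_of_card_le hsub' (le_trans hUcard (htcard i))
    have hLeq : ∀ i : ι, Le i = U ∪ F := by
      intro i
      have h1 : (Le i \ F).card = U.card := by rw [hteq i]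
      have heq := Finset.card_sdiff_add_card_inter (Le i) F
      have hFin : Le i ∩ F = F := by
        apply Finset.eq_of_subset_of_card_le (Finset.inter_subset_right)
        have := hLe i
        omega
      have : Le i = (Le i \ F) ∪ (Le i ∩ F) := (Finset.sdiff_union_inter _ _).symm
      rw [this, hteq i, hFin]
    exact hj ((hLeq j₁).trans (hLeq j₂).symm)


lemma star_upper (n : ℕ) (hn : 3 ≤ n)
    (Lv : Fin (n+1) → Finset ℤ) (Le : (starGraphK n).edgeSet → Finset ℤ)
    (hLv : ∀ v, (Lv v).card = n + 2) (hLe : ∀ e, (Le e).card = n + 2) :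
    ListPOneTotalLabelable (starGraphK n) 2 Lv Le := by
  classical
  obtain ⟨c0, hc0, f, hfinj, hf⟩ := exists_center_and_sdr (ι := {i : Fin (n+1) // i ≠ 0}) n hn
    (card_leaves n) (Lv 0) (fun i => Le (leafEdge n i.1 i.2)) (hLv 0)
    (fun i => hLe _)
  -- leaf colors
  have hleaf : ∀ i : {i : Fin (n+1) // i ≠ 0}, ∃ y, y ∈ Lv i.1 ∧ y ≠ c0 ∧
      y ≠ f i - 1 ∧ y ≠ f i ∧ y ≠ f i + 1 := by
    intro i
    have hne : (Lv i.1 \ ({c0, f i - 1, f i, f i + 1} : Finset ℤ)).Nonempty := by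
      rw [← Finset.card_pos]
      have heq := Finset.card_sdiff_add_card_inter (Lv i.1) ({c0, f i - 1, f i, f i + 1} : Finset ℤ)
      have h4 : ({c0, f i - 1, f i, f i + 1} : Finset ℤ).card ≤ 4 := by
        have h1 := Finset.card_insert_le c0 ({f i - 1, f i, f i + 1} : Finset ℤ)
        have h2 := Finset.card_insert_le (f i - 1) ({f i, f i + 1} : Finset ℤ)
        have h3 := Finset.card_insert_le (f i) ({f i + 1} : Finset ℤ)
        simp only [Finset.card_singleton] at h3
        omega
      have h5 : (Lv i.1 ∩ ({c0, f i - 1, f i, f i + 1} : Finset ℤ)).card ≤ 4 :=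
        le_trans (Finset.card_le_card Finset.inter_subset_right) h4
      have := hLv i.1
      omega
    obtain ⟨y, hy⟩ := hne
    simp only [mem_sdiff, mem_insert, mem_singleton] at hy
    exact ⟨y, hy.1, by tauto, by tauto, by tauto, by tauto⟩
  choose g hg using hleaf
  refine ⟨fun v => if h : v = 0 then c0 else g ⟨v, h⟩,
    fun e => f ⟨starLeaf e, starLeaf_ne e⟩, ⟨?_, ?_, ?_⟩, ?_, ?_⟩
  · -- adjacent vertices distinct
    intro u v huv
    rw [star_adj] at huv
    obtain ⟨hne, h | h⟩ := huv
    · subst h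
      have hv : v ≠ 0 := fun h => hne h.symm
      simp only [dif_pos rfl, dif_neg hv]
      exact fun h => (hg ⟨v, hv⟩).2.1 h.symm
    · subst h
      have hu : u ≠ 0 := hne
      simp only [dif_pos rfl, dif_neg hu]
      exact (hg ⟨u, hu⟩).2.1
  · -- edge colors distinct
    intro e e' hne _
    intro h
    exact hne (starLeaf_injective (Subtype.mk_eq_mk.mp (hfinj h)))
  · -- incidence condition
    intro v e hv
    rw [starLeaf_eq e, Sym2.mem_iff] at hv
    obtain ⟨_, h1, h2, h3⟩ := hf ⟨starLeaf e, starLeaf_ne e⟩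
    rcases hv with rfl | rfl
    · show ((2:ℕ):ℤ) ≤ |(if h : (0 : Fin (n+1)) = 0 then c0 else g ⟨0, h⟩) -
        f ⟨starLeaf e, starLeaf_ne e⟩|
      rw [dif_pos rfl, le_abs]
      omega
    · obtain ⟨_, _, k1, k2, k3⟩ := hg ⟨starLeaf e, starLeaf_ne e⟩
      show ((2:ℕ):ℤ) ≤ |(if h : starLeaf e = 0 then c0 else g ⟨starLeaf e, h⟩) -
        f ⟨starLeaf e, starLeaf_ne e⟩|
      rw [dif_neg (starLeaf_ne e), le_abs]
      omega
  · -- vertex list membership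
    intro v
    by_cases h : v = 0
    · subst h; simpa using hc0
    · simp only [dif_neg h]
      exact (hg ⟨v, h⟩).1
  · -- edge list membership
    intro e
    have := (hf ⟨starLeaf e, starLeaf_ne e⟩).1
    rwa [leafEdge_eq e] at this


end StarAux

section StarMain
open Finset

/-- C_{2,1}^T(K_{1,n}) = n + 2 for n ≥ 3. -/
theorem pOneTotalChoosability_starGraph_two (n : ℕ) (hn : 3 ≤ n) :
    pOneTotalChoosability (starGraphK n) 2 = n + 2 := by
  classical
  have hmem : (n + 2) ∈ {k : ℕ | ∀ (Lv : Fin (n+1) → Finset ℤ)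
      (Le : (starGraphK n).edgeSet → Finset ℤ),
      (∀ v, (Lv v).card = k) → (∀ e, (Le e).card = k) →
      ListPOneTotalLabelable (starGraphK n) 2 Lv Le} := by
    intro Lv Le hLv hLe
    exact star_upper n hn Lv Le hLv hLe
  apply le_antisymm
  · exact Nat.sInf_le hmem
  · apply le_csInf ⟨_, hmem⟩
    intro k hk
    by_contra hlt
    push_neg at hlt
    have hkle : k ≤ n + 1 := by omega
    -- counterexample lists
    set I : Finset ℤ := Finset.Ico (0 : ℤ) k with hI
    have hIcard : I.card = k := by
      rw [hI, Int.card_Ico]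
      simp
    obtain ⟨cv, ce, ⟨hadj, hedge, hinc⟩, hcv, hce⟩ :=
      hk (fun _ => I) (fun _ => I) (fun _ => hIcard) (fun _ => hIcard)
    set c := cv 0 with hc
    set F : Finset ℤ := {c - 1, c, c + 1} with hF
    set J : Finset ℤ := I \ F with hJ
    -- the map from leaves
    have hφmem : ∀ i : {i : Fin (n+1) // i ≠ 0}, ce (leafEdge n i.1 i.2) ∈ J := by
      intro i
      have h1 : ce (leafEdge n i.1 i.2) ∈ I := hce _
      have h2 : (2 : ℤ) ≤ |cv 0 - ce (leafEdge n i.1 i.2)| := by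
        have := hinc 0 (leafEdge n i.1 i.2) (zero_mem_star_edge _)
        exact_mod_cast this
      rw [le_abs] at h2
      rw [hJ, mem_sdiff]
      refine ⟨h1, ?_⟩
      rw [hF]
      simp only [mem_insert, mem_singleton]
      push_neg
      omega
    have hφinj : Function.Injective (fun i : {i : Fin (n+1) // i ≠ 0} =>
        ce (leafEdge n i.1 i.2)) := by
      intro i j h
      by_contra hij
      have hedgene : leafEdge n i.1 i.2 ≠ leafEdge n j.1 j.2 := by
        intro heq
        apply hij
        have hh : s(0, i.1) = s(0, j.1) := congrArg Subtype.val heq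
        exact Subtype.ext (sym2_zero_inj i.2 hh)
      exact hedge _ _ hedgene ⟨0, zero_mem_star_edge _, zero_mem_star_edge _⟩ h
    have hcard : n ≤ J.card := by
      have := Finset.card_le_card_of_injOn
        (s := (Finset.univ : Finset {i : Fin (n+1) // i ≠ 0})) (t := J)
        (fun i : {i : Fin (n+1) // i ≠ 0} => ce (leafEdge n i.1 i.2))
        (fun i _ => hφmem i) (hφinj.injOn)
      rwa [Finset.card_univ, card_leaves n] at this
    -- I ∩ F has at least 2 elements
    have hcI : c ∈ I := hcv 0
    have hk3 : 3 ≤ k := by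
      have hJI : J ⊆ I := by rw [hJ]; exact Finset.sdiff_subset
      have := Finset.card_le_card hJI
      rw [hIcard] at this
      omega
    have hcIco : (0 : ℤ) ≤ c ∧ c < k := by
      rw [hI, Finset.mem_Ico] at hcI
      exact hcI
    set x : ℤ := if c = 0 then 1 else c - 1 with hx
    have hxI : x ∈ I ∩ F := by
      rw [Finset.mem_inter, hI, Finset.mem_Ico, hF]
      simp only [mem_insert, mem_singleton]
      by_cases h0 : c = 0 <;> simp [hx, h0] <;> omega
    have hcIF : c ∈ I ∩ F := by
      rw [Finset.mem_inter, hF]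
      simp only [mem_insert, mem_singleton]
      exact ⟨hcI, by tauto⟩
    have hxc : x ≠ c := by
      by_cases h0 : c = 0 <;> simp [hx, h0] <;> omega
    have h2IF : 2 ≤ (I ∩ F).card := by
      have hsub : ({x, c} : Finset ℤ) ⊆ I ∩ F := by
        intro y hy
        rcases Finset.mem_insert.mp hy with rfl | hy
        · exact hxI
        · rw [Finset.mem_singleton] at hy; subst hy; exact hcIF
      have : ({x, c} : Finset ℤ).card = 2 := by
        rw [Finset.card_insert_of_notMem (by simpa using hxc), Finset.card_singleton]
      rw [← this]
      exact Finset.card_le_card hsub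
    have heq := Finset.card_sdiff_add_card_inter I F
    rw [← hJ, hIcard] at heq
    omega

end StarMain
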